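/- Let Q and Q' be disjoint permutation matrices (their associated permutations move disjoint sets of vertices), each moving at most k vertices. For a graph A and channel-corrupted B̃, write X̂_Q = (1/2)(‖A − QᵀB̃Q‖_F² − ‖A − B̃‖_F²). Then X̂_{Q'} can be decomposed as X̂_{Q'} = Y + W, where Y is a function only of corruption variables not involved in X̂_Q (hence Y is independent of X̂_Q) and |W| ≤ 2k². -/

import Mathlib

open Finset

attribute [local instance] Classical.propDecidable

/-- Squared Frobenius norm of a matrix. -/
noncomputable def frobSq {n : ℕ} (M : Matrix (Fin n) (Fin n) ℝ) : ℝ := ∑ i, ∑ j, (M i j) ^ 2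

/-- `(QᵀMQ)_{ij} = M_{σ(i)σ(j)}` for the permutation matrix `Q` of `σ`. -/
noncomputable def conjPerm {n : ℕ} (σ : Equiv.Perm (Fin n)) (M : Matrix (Fin n) (Fin n) ℝ) :
    Matrix (Fin n) (Fin n) ℝ := Matrix.of fun i j => M (σ i) (σ j)

/-- Unordered vertex pairs, represented by ordered pairs `i < j`. -/
def pairsF (n : ℕ) : Finset (Fin n × Fin n) := Finset.univ.filter fun p => p.1 < p.2

/-- Symmetrized flip indicator. -/
def flipAt {n : ℕ} (f : Fin n × Fin n → Bool) (i j : Fin n) : Bool :=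
  if i < j then f (i, j) else if j < i then f (j, i) else false

/-- The channel-corrupted graph (with identity shuffling). -/
noncomputable def corrupt {n : ℕ} (A : Matrix (Fin n) (Fin n) ℝ) (f : Fin n × Fin n → Bool) :
    Matrix (Fin n) (Fin n) ℝ := Matrix.of fun i j => if flipAt f i j then 1 - A i j else A i j

/-- Probability weight of a flip configuration with per-pair flip probabilities `q`. -/
noncomputable def wt {n : ℕ} (q : Fin n × Fin n → ℝ) (f : Fin n × Fin n → Bool) : ℝ :=
  ∏ p ∈ pairsF n, if f p then q p else 1 - q p

/-- The matrix has 0/1 entries. -/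
def zeroOne {n : ℕ} (A : Matrix (Fin n) (Fin n) ℝ) : Prop := ∀ i j, A i j = 0 ∨ A i j = 1

/-- The matrix has zero diagonal. -/
def hollow {n : ℕ} (A : Matrix (Fin n) (Fin n) ℝ) : Prop := ∀ i, A i i = 0

/-- `X̂_Q(f) = (1/2)(‖A − QᵀB̃Q‖_F² − ‖A − B̃‖_F²)` for the corruption configuration `f`. -/
noncomputable def XhatFn {n : ℕ} (A : Matrix (Fin n) (Fin n) ℝ) (σ : Equiv.Perm (Fin n))
    (f : Fin n × Fin n → Bool) : ℝ :=
  (1 / 2) * (frobSq (A - conjPerm σ (corrupt A f)) - frobSq (A - corrupt A f))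

lemma corrupt_apply {n : ℕ} (A : Matrix (Fin n) (Fin n) ℝ) (f : Fin n × Fin n → Bool)
    (i j : Fin n) : corrupt A f i j = if flipAt f i j then 1 - A i j else A i j := rfl

lemma corrupt01 {n : ℕ} {A : Matrix (Fin n) (Fin n) ℝ} (hA01 : zeroOne A)
    (f : Fin n × Fin n → Bool) (i j : Fin n) :
    corrupt A f i j = 0 ∨ corrupt A f i j = 1 := by
  rw [corrupt_apply]
  rcases hA01 i j with h | h <;> rw [h] <;> split <;> norm_num

lemma corrupt_congr {n : ℕ} (A : Matrix (Fin n) (Fin n) ℝ) {f g : Fin n × Fin n → Bool}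
    {i j : Fin n} (h : flipAt f i j = flipAt g i j) :
    corrupt A f i j = corrupt A g i j := by
  rw [corrupt_apply, corrupt_apply, h]

lemma flipAt_congr {n : ℕ} {f g : Fin n × Fin n → Bool} (i j : Fin n)
    (h : ∀ pr ∈ pairsF n, f pr = g pr) : flipAt f i j = flipAt g i j := by
  unfold flipAt
  split_ifs with h1 h2
  · exact h (i, j) (by simp [pairsF, h1])
  · exact h (j, i) (by simp [pairsF, h2])
  · rfl

lemma XhatFn_congr {n : ℕ} (A : Matrix (Fin n) (Fin n) ℝ) (τ : Equiv.Perm (Fin n))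
    {f g : Fin n × Fin n → Bool} (h : ∀ pr ∈ pairsF n, f pr = g pr) :
    XhatFn A τ f = XhatFn A τ g := by
  have : corrupt A f = corrupt A g := by
    ext i j
    exact corrupt_congr A (flipAt_congr i j h)
  unfold XhatFn
  rw [this]

lemma Xhat_expand {n : ℕ} (A : Matrix (Fin n) (Fin n) ℝ) (τ : Equiv.Perm (Fin n))
    (f : Fin n × Fin n → Bool) :
    XhatFn A τ f = (1 / 2) * ∑ p ∈ (Finset.univ ×ˢ Finset.univ : Finset (Fin n × Fin n)),
      ((A p.1 p.2 - corrupt A f (τ p.1) (τ p.2)) ^ 2 - (A p.1 p.2 - corrupt A f p.1 p.2) ^ 2) := by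
  unfold XhatFn frobSq
  rw [Finset.sum_product]
  simp only [Matrix.sub_apply, conjPerm, Matrix.of_apply, ← Finset.sum_sub_distrib]

theorem stmt17 {n k : ℕ} (A : Matrix (Fin n) (Fin n) ℝ)
    (hA01 : zeroOne A) (hAsym : A.IsSymm) (hAh : hollow A)
    (σ τ : Equiv.Perm (Fin n))
    -- σ and τ move disjoint sets of vertices, each of size at most k
    (hdisj : ∀ i, σ i = i ∨ τ i = i)
    (hσk : (Finset.univ.filter fun i => σ i ≠ i).card ≤ k)
    (hτk : (Finset.univ.filter fun i => τ i ≠ i).card ≤ k) :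
    ∃ Y W : (Fin n × Fin n → Bool) → ℝ,
      (∀ f, XhatFn A τ f = Y f + W f) ∧
      (∀ f, |W f| ≤ 2 * (k : ℝ) ^ 2) ∧
      -- Y depends only on corruption variables not involved in X̂_σ, i.e. only on pairs
      -- both of whose endpoints are fixed by σ (hence Y is independent of X̂_σ)
      (∀ f g : Fin n × Fin n → Bool,
        (∀ pr ∈ pairsF n, σ pr.1 = pr.1 ∧ σ pr.2 = pr.2 → f pr = g pr) → Y f = Y g) := by
  classical
  set S : Finset (Fin n) := Finset.univ.filter fun i => σ i ≠ i with hS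
  set T : Finset (Fin n) := Finset.univ.filter fun i => τ i ≠ i with hT
  set mask : (Fin n × Fin n → Bool) → (Fin n × Fin n → Bool) :=
    fun f pr => if σ pr.1 = pr.1 ∧ σ pr.2 = pr.2 then f pr else false with hmask
  refine ⟨fun f => XhatFn A τ (mask f), fun f => XhatFn A τ f - XhatFn A τ (mask f),
    fun f => by ring, ?_, ?_⟩
  · -- the bound on W
    intro f
    -- σ fixes everything τ moves (and images)
    have hfix : ∀ i : Fin n, τ i ≠ i → σ i = i ∧ σ (τ i) = τ i := by
      intro i hi
      refine ⟨(hdisj i).resolve_right hi, ?_⟩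
      rcases hdisj (τ i) with h | h
      · exact h
      · exact absurd (τ.injective h) hi
    -- flip equality under mask when both endpoints σ-fixed
    have hflip : ∀ a b : Fin n, σ a = a → σ b = b → flipAt (mask f) a b = flipAt f a b := by
      intro a b ha hb
      unfold flipAt
      split_ifs with h1 h2
      · simp [hmask, ha, hb]
      · simp [hmask, ha, hb]
      · rfl
    set d : Fin n × Fin n → ℝ := fun p =>
      ((A p.1 p.2 - corrupt A f (τ p.1) (τ p.2)) ^ 2 - (A p.1 p.2 - corrupt A f p.1 p.2) ^ 2)
      - ((A p.1 p.2 - corrupt A (mask f) (τ p.1) (τ p.2)) ^ 2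
        - (A p.1 p.2 - corrupt A (mask f) p.1 p.2) ^ 2) with hd
    have hW : XhatFn A τ f - XhatFn A τ (mask f)
        = (1 / 2) * ∑ p ∈ (Finset.univ ×ˢ Finset.univ : Finset (Fin n × Fin n)), d p := by
      rw [Xhat_expand, Xhat_expand, ← mul_sub, ← Finset.sum_sub_distrib]
    set E : Finset (Fin n × Fin n) := (T ×ˢ S) ∪ (S ×ˢ T) with hE
    have hzero : ∀ p ∈ (Finset.univ ×ˢ Finset.univ : Finset (Fin n × Fin n)),
        p ∉ E → d p = 0 := by
      rintro ⟨i, j⟩ - hp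
      simp only [hE, Finset.mem_union, Finset.mem_product, hS, hT, Finset.mem_filter,
        Finset.mem_univ, true_and, not_or, not_and_or, not_not] at hp
      obtain ⟨hp1, hp2⟩ := hp
      by_cases hti : τ i = i
      · by_cases htj : τ j = j
        · simp [hd, hti, htj]
        · -- j moved by τ, hence i must be σ-fixed; all four endpoints σ-fixed
          have hσj := (hfix j htj).1
          have hσtj := (hfix j htj).2
          have hσi : σ i = i := by
            rcases hp2 with h | h
            · exact h
            · exact absurd h htj
          have e1 : corrupt A (mask f) i j = corrupt A f i j :=
            corrupt_congr A (hflip i j hσi hσj)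
          have e2 : corrupt A (mask f) (τ i) (τ j) = corrupt A f (τ i) (τ j) := by
            refine corrupt_congr A (hflip (τ i) (τ j) ?_ hσtj)
            rw [hti]; exact hσi
          simp [hd, e1, e2]
      · have hσi := (hfix i hti).1
        have hσti := (hfix i hti).2
        have hσj : σ j = j := by
          rcases hp1 with h | h
          · exact absurd h hti
          · exact h
        have hσtj : σ (τ j) = τ j := by
          by_cases htj : τ j = j
          · rw [htj]; exact hσj
          · exact (hfix j htj).2
        have e1 : corrupt A (mask f) i j = corrupt A f i j :=
          corrupt_congr A (hflip i j hσi hσj)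
        have e2 : corrupt A (mask f) (τ i) (τ j) = corrupt A f (τ i) (τ j) :=
          corrupt_congr A (hflip (τ i) (τ j) hσti hσtj)
        simp [hd, e1, e2]
    have hsum : ∑ p ∈ (Finset.univ ×ˢ Finset.univ : Finset (Fin n × Fin n)), d p
        = ∑ p ∈ E, d p :=
      (Finset.sum_subset (Finset.subset_univ E |>.trans (by simp))
        (fun x hx hxE => hzero x hx hxE)).symm
    -- pointwise bound on d
    have hsq : ∀ (g : Fin n × Fin n → Bool) (a b c e : Fin n),
        0 ≤ (A a b - corrupt A g c e) ^ 2 ∧ (A a b - corrupt A g c e) ^ 2 ≤ 1 := by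
      intro g a b c e
      rcases hA01 a b with h1 | h1 <;> rcases corrupt01 hA01 g c e with h2 | h2 <;>
        rw [h1, h2] <;> norm_num
    have hdle : ∀ p ∈ E, |d p| ≤ 2 := by
      intro p _
      obtain ⟨q1, q2⟩ := hsq f p.1 p.2 (τ p.1) (τ p.2)
      obtain ⟨q3, q4⟩ := hsq f p.1 p.2 p.1 p.2
      obtain ⟨q5, q6⟩ := hsq (mask f) p.1 p.2 (τ p.1) (τ p.2)
      obtain ⟨q7, q8⟩ := hsq (mask f) p.1 p.2 p.1 p.2
      rw [hd, abs_le]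
      constructor <;> simp only <;> linarith
    have hcard : (E.card : ℝ) ≤ 2 * (k : ℝ) ^ 2 := by
      have h1 : E.card ≤ (T ×ˢ S).card + (S ×ˢ T).card := Finset.card_union_le _ _
      rw [Finset.card_product, Finset.card_product] at h1
      have : E.card ≤ 2 * k ^ 2 := by
        calc E.card ≤ T.card * S.card + S.card * T.card := h1
        _ ≤ k * k + k * k := by
            exact Nat.add_le_add (Nat.mul_le_mul hτk hσk) (Nat.mul_le_mul hσk hτk)
        _ = 2 * k ^ 2 := by ring
      calc (E.card : ℝ) ≤ ((2 * k ^ 2 : ℕ) : ℝ) := Nat.cast_le.mpr this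
        _ = 2 * (k : ℝ) ^ 2 := by push_cast; ring
    calc |XhatFn A τ f - XhatFn A τ (mask f)|
        = (1 / 2) * |∑ p ∈ E, d p| := by
          rw [hW, hsum, abs_mul]; norm_num
      _ ≤ (1 / 2) * ∑ p ∈ E, |d p| := by
          gcongr; exact Finset.abs_sum_le_sum_abs _ _
      _ ≤ (1 / 2) * (E.card * 2) := by
          gcongr ?_ * ?_
          · calc ∑ p ∈ E, |d p| ≤ E.card • (2 : ℝ) := Finset.sum_le_card_nsmul E _ 2 hdle
              _ = E.card * 2 := by rw [nsmul_eq_mul]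
      _ = E.card := by ring
      _ ≤ 2 * (k : ℝ) ^ 2 := hcard
  · -- Y depends only on σ-fixed pairs
    intro f g h
    refine XhatFn_congr A τ ?_
    intro pr hpr
    simp only [hmask]
    split_ifs with hc
    · exact h pr hpr hc
    · rfl
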